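/- Let n ≥ 1 be a natural number and let a, b be real numbers with a ≠ b. Then the (n−1)-st iterated derivative of the function x ↦ (e^x/(x−b))^n, evaluated at x = a, equals (1/n)·(n·e^a/(a−b))^n · Σ_{k=0}^{n−1} ((n−1+k)!/((n−1−k)!·k!)) · (−1/(n(a−b)))^k. (This identifies the n-th Lagrange inversion coefficient for the equation (x−a)(x−b) = l·e^x with (1/(n·n!))·(n·l·e^a/(a−b))^n · B_{n−1}(−2/(n(a−b))), where B_m denotes the Bessel polynomial.) -/

import Mathlib

open Real Finset

/-- The (n−1)-st iterated derivative of `x ↦ (e^x/(x−b))^n` at `x = a` equals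
`(1/n)·(n·e^a/(a−b))^n · Σ_{k=0}^{n−1} ((n−1+k)!/((n−1−k)!·k!)) · (−1/(n(a−b)))^k`,
i.e. the n-th Lagrange inversion coefficient for `(x−a)(x−b) = l·e^x` is expressed via
the Bessel polynomial `B_{n−1}(−2/(n(a−b)))`. -/

noncomputable def cf (p m j : ℕ) : ℝ :=
  (m.choose j : ℝ) * ((p : ℝ) + 1) ^ (m - j) * (-1) ^ j *
    (((p + j).factorial : ℝ) / (p.factorial : ℝ))

lemma cf_succ (p m j : ℕ) :
    cf p (m + 1) (j + 1) =
      ((p : ℝ) + 1) * cf p m (j + 1) - ((p : ℝ) + 1 + j) * cf p m j := by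
  unfold cf
  have hr : (((p + (j + 1)).factorial : ℝ)) = ((p : ℝ) + 1 + j) * ((p + j).factorial : ℝ) := by
    have : p + (j + 1) = (p + j) + 1 := by omega
    rw [this, Nat.factorial_succ]
    push_cast; ring
  have hpas : ((m + 1).choose (j + 1) : ℝ) = (m.choose j : ℝ) + (m.choose (j + 1) : ℝ) := by
    rw [Nat.choose_succ_succ]; push_cast; ring
  rcases le_or_gt (j + 1) m with h | h
  · have hpow : ((p : ℝ) + 1) ^ (m + 1 - (j + 1)) =
        ((p : ℝ) + 1) * ((p : ℝ) + 1) ^ (m - (j + 1)) := by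
      have h3 : m + 1 - (j + 1) = (m - (j + 1)) + 1 := by omega
      rw [h3, pow_succ]; ring
    have hpow' : ((p : ℝ) + 1) ^ (m - j) =
        ((p : ℝ) + 1) * ((p : ℝ) + 1) ^ (m - (j + 1)) := by
      have h3 : m - j = (m - (j + 1)) + 1 := by omega
      rw [h3, pow_succ]; ring
    rw [hpas, hr, hpow, hpow']
    ring
  · have h0 : m.choose (j + 1) = 0 := Nat.choose_eq_zero_of_lt (by omega)
    have h1 : (m + 1).choose (j + 1) = m.choose j := by
      rw [Nat.choose_succ_succ, h0, Nat.add_zero]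
    have h2 : m + 1 - (j + 1) = m - j := by omega
    rw [h0, h1, h2, hr]
    push_cast
    ring

noncomputable def FF (p : ℕ) (b : ℝ) (m : ℕ) (x : ℝ) : ℝ :=
  ∑ j ∈ Finset.range (m + 1),
    cf p m j * (Real.exp (((p : ℝ) + 1) * x) * (x - b) ^ (-((p : ℤ) + 1 + j)))

lemma key (p : ℕ) (b : ℝ) (m : ℕ) :
    ∀ x : ℝ, x ≠ b →
      iteratedDeriv m (fun x : ℝ => (Real.exp x / (x - b)) ^ (p + 1)) x = FF p b m x := by
  induction m with
  | zero =>
    intro x hx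
    have hzb : x - b ≠ 0 := sub_ne_zero.mpr hx
    rw [iteratedDeriv_zero]
    unfold FF
    rw [Finset.sum_range_one]
    have hc0 : cf p 0 0 = 1 := by
      have hf : (p.factorial : ℝ) ≠ 0 := Nat.cast_ne_zero.mpr p.factorial_ne_zero
      simp [cf, div_self hf]
    rw [hc0, one_mul, div_pow, ← Real.exp_nat_mul]
    have he : (-((p : ℤ) + 1 + (0 : ℕ))) = -((p + 1 : ℕ) : ℤ) := by push_cast; ring
    rw [he, zpow_neg, zpow_natCast]
    push_cast
    rw [div_eq_mul_inv]
  | succ m ih =>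
    intro x hx
    have hzb : x - b ≠ 0 := sub_ne_zero.mpr hx
    rw [iteratedDeriv_succ]
    have hev : iteratedDeriv m (fun x : ℝ => (Real.exp x / (x - b)) ^ (p + 1)) =ᶠ[nhds x]
        FF p b m := by
      filter_upwards [isOpen_ne.mem_nhds hx] with y hy using ih y hy
    rw [hev.deriv_eq]
    -- derivative of FF p b m
    have hE : HasDerivAt (fun y : ℝ => Real.exp (((p : ℝ) + 1) * y))
        (((p : ℝ) + 1) * Real.exp (((p : ℝ) + 1) * x)) x := by
      simpa [mul_comm] using ((hasDerivAt_id x).const_mul ((p : ℝ) + 1)).exp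
    have hZ : ∀ j : ℕ, HasDerivAt (fun y : ℝ => (y - b) ^ (-((p : ℤ) + 1 + j)))
        ((-((p : ℝ) + 1 + j)) * (x - b) ^ (-((p : ℤ) + 1 + j) - 1)) x := by
      intro j
      have := (hasDerivAt_zpow (-((p : ℤ) + 1 + j)) (x - b) (Or.inl hzb)).comp x
        ((hasDerivAt_id x).sub_const b)
      simpa [Function.comp_def, mul_comm] using this
    have hsum : HasDerivAt (FF p b m)
        (∑ j ∈ Finset.range (m + 1), cf p m j *
          ((((p : ℝ) + 1) * Real.exp (((p : ℝ) + 1) * x)) * (x - b) ^ (-((p : ℤ) + 1 + j)) +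
           Real.exp (((p : ℝ) + 1) * x) *
             ((-((p : ℝ) + 1 + j)) * (x - b) ^ (-((p : ℤ) + 1 + j) - 1)))) x := by
      apply HasDerivAt.fun_sum
      intro j _
      exact (hE.mul (hZ j)).const_mul _
    rw [hsum.deriv]
    -- now algebra
    have hsplit : ∀ j ∈ Finset.range (m + 1), cf p m j *
          ((((p : ℝ) + 1) * Real.exp (((p : ℝ) + 1) * x)) * (x - b) ^ (-((p : ℤ) + 1 + j)) +
           Real.exp (((p : ℝ) + 1) * x) *
             ((-((p : ℝ) + 1 + j)) * (x - b) ^ (-((p : ℤ) + 1 + j) - 1)))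
        = (((p : ℝ) + 1) * cf p m j) *
            (Real.exp (((p : ℝ) + 1) * x) * (x - b) ^ (-((p : ℤ) + 1 + j))) +
          ((-((p : ℝ) + 1 + j)) * cf p m j) *
            (Real.exp (((p : ℝ) + 1) * x) * (x - b) ^ (-((p : ℤ) + 1 + j) - 1)) := by
      intro j _; ring
    rw [Finset.sum_congr rfl hsplit, Finset.sum_add_distrib]
    unfold FF
    -- RHS sum over range (m+2); split coefficient
    have hco : ∀ j, cf p (m + 1) j = ((p : ℝ) + 1) * cf p m j +
        (cf p (m + 1) j - ((p : ℝ) + 1) * cf p m j) := by intro j; ring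
    calc
      (∑ j ∈ Finset.range (m + 1), (((p : ℝ) + 1) * cf p m j) *
            (Real.exp (((p : ℝ) + 1) * x) * (x - b) ^ (-((p : ℤ) + 1 + j)))) +
        ∑ j ∈ Finset.range (m + 1), ((-((p : ℝ) + 1 + j)) * cf p m j) *
            (Real.exp (((p : ℝ) + 1) * x) * (x - b) ^ (-((p : ℤ) + 1 + j) - 1))
        = (∑ j ∈ Finset.range (m + 2), (((p : ℝ) + 1) * cf p m j) *
            (Real.exp (((p : ℝ) + 1) * x) * (x - b) ^ (-((p : ℤ) + 1 + j)))) +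
          ∑ j ∈ Finset.range (m + 2),
            ((cf p (m + 1) j - ((p : ℝ) + 1) * cf p m j)) *
            (Real.exp (((p : ℝ) + 1) * x) * (x - b) ^ (-((p : ℤ) + 1 + j))) := by
          congr 1
          · rw [Finset.sum_range_succ (n := m + 1)]
            have : cf p m (m + 1) = 0 := by
              unfold cf; simp [Nat.choose_succ_self]
            rw [this]; ring
          · rw [Finset.sum_range_succ' _ (m + 1)]
            have h0 : cf p (m + 1) 0 - ((p : ℝ) + 1) * cf p m 0 = 0 := by
              unfold cf
              simp [pow_succ]
              ring
            rw [h0, zero_mul, add_zero]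
            apply Finset.sum_congr rfl
            intro j _
            rw [cf_succ]
            have hexp : (-((p : ℤ) + 1 + (j + 1 : ℕ))) = -((p : ℤ) + 1 + j) - 1 := by
              push_cast; ring
            rw [hexp]
            ring
      _ = ∑ j ∈ Finset.range (m + 2), cf p (m + 1) j *
            (Real.exp (((p : ℝ) + 1) * x) * (x - b) ^ (-((p : ℤ) + 1 + j))) := by
          rw [← Finset.sum_add_distrib]
          apply Finset.sum_congr rfl
          intro j _
          ring

theorem lagrange_coeff_bessel (n : ℕ) (hn : 1 ≤ n) (a b : ℝ) (hab : a ≠ b) :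
    iteratedDeriv (n - 1) (fun x : ℝ => (Real.exp x / (x - b)) ^ n) a =
      (1 / (n : ℝ)) * ((n : ℝ) * Real.exp a / (a - b)) ^ n *
        ∑ k ∈ Finset.range n,
          (((n - 1 + k).factorial : ℝ) / (((n - 1 - k).factorial : ℝ) * (k.factorial : ℝ))) *
            (-1 / ((n : ℝ) * (a - b))) ^ k := by
  obtain ⟨p, rfl⟩ : ∃ p, n = p + 1 := ⟨n - 1, by omega⟩
  have hab' : a - b ≠ 0 := sub_ne_zero.mpr hab
  have hkey := key p b (p + 1 - 1) a hab
  simp only [Nat.add_sub_cancel] at hkey ⊢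
  rw [hkey]
  unfold FF
  rw [Finset.mul_sum]
  apply Finset.sum_congr rfl
  intro j hj
  have hjp : j ≤ p := by simpa using Nat.lt_succ_iff.mp (Finset.mem_range.mp hj)
  unfold cf
  have hch : ((p.choose j : ℝ)) = (p.factorial : ℝ) / ((j.factorial : ℝ) * ((p - j).factorial : ℝ)) :=
    Nat.cast_choose ℝ hjp
  rw [hch]
  have hzp : (a - b) ^ (-((p : ℤ) + 1 + j)) = ((a - b) ^ (p + 1 + j) : ℝ)⁻¹ := by
    rw [← zpow_natCast (a - b) (p + 1 + j), ← zpow_neg]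
    norm_num
  rw [hzp]
  have hexp : Real.exp (((p : ℝ) + 1) * a) = Real.exp a ^ (p + 1) := by
    rw [← Real.exp_nat_mul, Nat.cast_add, Nat.cast_one]
  rw [hexp]
  have hne1 : ((p : ℝ) + 1) ≠ 0 := by positivity
  have hfj : (j.factorial : ℝ) ≠ 0 := Nat.cast_ne_zero.mpr j.factorial_ne_zero
  have hfpj : ((p - j).factorial : ℝ) ≠ 0 := Nat.cast_ne_zero.mpr (p - j).factorial_ne_zero
  have hfp : (p.factorial : ℝ) ≠ 0 := Nat.cast_ne_zero.mpr p.factorial_ne_zero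
  have hE : Real.exp a ≠ 0 := Real.exp_ne_zero a
  obtain ⟨q, rfl⟩ : ∃ q, p = q + j := ⟨p - j, by omega⟩
  simp only [Nat.add_sub_cancel] at *
  push_cast
  simp only [div_pow, mul_pow]
  field_simp
  ring
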